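/- Let p be a prime with p ≡ 7 (mod 16) and Legendre symbol (−7/p) = −1. In the quotient ring ℤ[x]/(x²+3x+4), letting α denote the image of x, one has α^((p+1)/2) ≡ 2^((p+1)/2) (mod p), i.e., α^((p+1)/2) − 2^((p+1)/2) lies in the ideal generated by p. -/

import Mathlib

open Polynomial

private lemma alpha_key (p : ℕ) [Fact p.Prime] (hp16 : p % 16 = 7)
    (h7 : legendreSym p (-7) = -1) :
    ((X : (ZMod p)[X]) ^ 2 + C 3 * X + C 4) ∣ (X ^ ((p + 1) / 2) - 2 ^ ((p + 1) / 2)) := by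
  have hp : p.Prime := Fact.out
  have hp2 : p % 2 = 1 := by omega
  have h7ne : (-7 : ZMod p) ≠ 0 := by
    intro h
    have : legendreSym p (-7) = 0 := (legendreSym.eq_zero_iff p (-7)).mpr (by push_cast [h]; rfl)
    omega
  have hns : ¬ IsSquare (-7 : ZMod p) := by
    have := (legendreSym.eq_neg_one_iff p (a := -7)).mp h7
    push_cast at this
    exact this
  have hirr : Irreducible ((X : (ZMod p)[X]) ^ 2 + C 3 * X + C 4) := by
    have hdeg : ((X : (ZMod p)[X]) ^ 2 + C 3 * X + C 4).natDegree = 2 := by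
      compute_degree!
    rw [irreducible_iff_roots_eq_zero_of_degree_le_three (by omega) (by omega)]
    rw [Multiset.eq_zero_iff_forall_notMem]
    intro c hc
    rw [mem_roots, IsRoot] at hc
    · have hc' : c ^ 2 + 3 * c + 4 = 0 := by
        have := hc
        simpa using this
      exact hns ⟨2 * c + 3, by linear_combination -4 * hc' ⟩
    · intro h
      have := hdeg
      rw [h] at this
      simp at this
  set f : (ZMod p)[X] := X ^ 2 + C 3 * X + C 4 with hf
  haveI : Fact (Irreducible f) := ⟨hirr⟩
  set S := AdjoinRoot f
  have hinj : Function.Injective (algebraMap (ZMod p) S) := (algebraMap (ZMod p) S).injective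
  haveI : CharP S p := charP_of_injective_algebraMap hinj p
  set a : S := AdjoinRoot.root f with ha
  have haroot : a ^ 2 + 3 * a + 4 = 0 := by
    have := AdjoinRoot.mk_self (f := f)
    rw [hf] at this
    simp [map_add, map_mul, map_pow, AdjoinRoot.mk_X] at this
    rw [map_ofNat (AdjoinRoot.of _) 3, map_ofNat (AdjoinRoot.of _) 4] at this
    exact this
  set b : S := a + 2 with hb
  have hb2 : b ^ 2 = b - 2 := by rw [hb]; linear_combination haroot
  have h2p : (2 : S) ^ p = 2 := by
    rw [← map_ofNat (algebraMap (ZMod p) S) 2, ← map_pow, ZMod.pow_card]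
  have hq2 : (b ^ p) ^ 2 = b ^ p - 2 := by
    rw [← pow_mul, mul_comm, pow_mul, hb2, sub_pow_char, h2p]
  have hsplit : (b ^ p - b) * (b ^ p - (1 - b)) = 0 := by
    linear_combination hq2 - hb2
  rcases mul_eq_zero.mp hsplit with h | h
  · exfalso
    have hbp : b ^ p = b := sub_eq_zero.mp h
    set w : S := 2 * b - 1 with hw
    have hw2 : w ^ 2 = -7 := by rw [hw]; linear_combination 4 * hb2
    have hwp : w ^ p = w := by
      rw [hw, sub_pow_char, mul_pow, h2p, one_pow, hbp]
    have hwne : w ≠ 0 := by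
      intro h0
      apply h7ne
      apply hinj
      rw [map_neg, map_ofNat, map_zero]
      rw [h0] at hw2
      simpa using hw2.symm
    have hw1 : w ^ (p - 1) = 1 := by
      have : w ^ (p - 1) * w = 1 * w := by
        rw [one_mul, ← pow_succ]
        rw [Nat.sub_add_cancel hp.one_lt.le, hwp]
      exact mul_right_cancel₀ hwne this
    have h71 : (-7 : ZMod p) ^ (p / 2) = 1 := by
      apply hinj
      rw [map_pow, map_one]
      calc (algebraMap (ZMod p) S (-7)) ^ (p/2) = (w ^ 2) ^ (p/2) := by
            rw [hw2, map_neg, map_ofNat]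
        _ = w ^ (p - 1) := by rw [← pow_mul]; congr 1; omega
        _ = 1 := hw1
    have hleg := legendreSym.eq_pow p (-7)
    rw [h7] at hleg
    have hcast : ((-7 : ℤ) : ZMod p) = (-7 : ZMod p) := by push_cast; ring
    rw [hcast, h71] at hleg
    have h2 : ((2 : ℕ) : ZMod p) = 0 := by push_cast at hleg ⊢; linear_combination -hleg
    rw [ZMod.natCast_eq_zero_iff] at h2
    have := Nat.le_of_dvd (by norm_num) h2
    omega
  · have hbp : b ^ p = 1 - b := sub_eq_zero.mp h
    have hbp1 : b ^ (p + 1) = 2 := by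
      rw [pow_succ, hbp]; linear_combination -hb2
    set n := (p + 1) / 2 with hn
    have h2n : 2 * n = p + 1 := by omega
    have han : a ^ n = 2 := by
      have : a = b ^ 2 := by rw [hb2, hb]; ring
      rw [this, ← pow_mul, h2n, hbp1]
    have h2sq : IsSquare (2 : ZMod p) := by
      rw [ZMod.exists_sq_eq_two_iff (by omega)]
      right; omega
    have h2ne : (2 : ZMod p) ≠ 0 := by
      intro h0
      have : ((2:ℕ) : ZMod p) = 0 := by push_cast; exact h0
      rw [ZMod.natCast_eq_zero_iff] at this
      have := Nat.le_of_dvd (by norm_num) this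
      omega
    have h2half : (2 : ZMod p) ^ (p / 2) = 1 := (ZMod.euler_criterion p h2ne).mp h2sq
    have h2nS : (2 : S) ^ n = 2 := by
      rw [← map_ofNat (algebraMap (ZMod p) S) 2, ← map_pow]
      congr 1
      have : n = p / 2 + 1 := by omega
      rw [this, pow_succ, h2half, one_mul]
    have : AdjoinRoot.mk f ((X : (ZMod p)[X]) ^ n - 2 ^ n) = 0 := by
      rw [map_sub, map_pow, AdjoinRoot.mk_X, map_pow, map_ofNat, han, h2nS, sub_self]
    exact AdjoinRoot.mk_eq_zero.mp this

theorem alpha_pow_cong (p : ℕ) [Fact p.Prime] (hp16 : p % 16 = 7)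
    (h7 : legendreSym p (-7) = -1) :
    (Ideal.Quotient.mk (Ideal.span {(X : ℤ[X]) ^ 2 + C 3 * X + C 4}) X) ^ ((p + 1) / 2)
      - (2 : ℤ[X] ⧸ Ideal.span {(X : ℤ[X]) ^ 2 + C 3 * X + C 4}) ^ ((p + 1) / 2)
      ∈ Ideal.span {(p : ℤ[X] ⧸ Ideal.span {(X : ℤ[X]) ^ 2 + C 3 * X + C 4})} := by
  set n := (p + 1) / 2 with hn
  obtain ⟨g, hg⟩ := alpha_key p hp16 h7
  obtain ⟨G, hG⟩ := Polynomial.map_surjective (Int.castRingHom (ZMod p))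
    ZMod.intCast_surjective g
  set f : ℤ[X] := X ^ 2 + C 3 * X + C 4 with hf
  set D : ℤ[X] := X ^ n - 2 ^ n - f * G with hD
  have hDmap : D ∈ RingHom.ker (Polynomial.mapRingHom (Int.castRingHom (ZMod p))) := by
    rw [RingHom.mem_ker, hD, coe_mapRingHom]
    have h3 : (Int.castRingHom (ZMod p)) (3:ℤ) = 3 := map_ofNat _ 3
    have h4 : (Int.castRingHom (ZMod p)) (4:ℤ) = 4 := map_ofNat _ 4
    simp only [hf, Polynomial.map_sub, Polynomial.map_add, Polynomial.map_mul,
      Polynomial.map_pow, Polynomial.map_ofNat, Polynomial.map_X, Polynomial.map_C,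
      h3, h4, hG]
    rw [← hg]
    ring
  rw [Polynomial.ker_mapRingHom, ZMod.ker_intCastRingHom, Ideal.map_span] at hDmap
  simp only [Set.image_singleton] at hDmap
  rw [Ideal.mem_span_singleton] at hDmap
  obtain ⟨E, hE⟩ := hDmap
  rw [Ideal.mem_span_singleton]
  refine ⟨Ideal.Quotient.mk _ E, ?_⟩
  have hmk2 : (2 : ℤ[X] ⧸ Ideal.span {f}) = Ideal.Quotient.mk (Ideal.span {f}) 2 := by
    rw [map_ofNat]
  have hCp : (C (p:ℤ) : ℤ[X]) = ((p:ℕ) : ℤ[X]) := Polynomial.C_eq_natCast p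
  have hmkp : (p : ℤ[X] ⧸ Ideal.span {f}) = Ideal.Quotient.mk (Ideal.span {f}) (C (p:ℤ)) := by
    rw [hCp, map_natCast]
  rw [hmk2, hmkp, ← map_pow, ← map_pow, ← map_sub, ← map_mul]
  have hfz : Ideal.Quotient.mk (Ideal.span {f}) f = 0 :=
    Ideal.Quotient.eq_zero_iff_mem.mpr (Ideal.subset_span rfl)
  calc Ideal.Quotient.mk (Ideal.span {f}) (X ^ n - 2 ^ n)
      = Ideal.Quotient.mk (Ideal.span {f}) (D + f * G) := by rw [hD]; ring_nf
    _ = Ideal.Quotient.mk (Ideal.span {f}) D := by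
        rw [map_add, map_mul, hfz, zero_mul, add_zero]
    _ = Ideal.Quotient.mk (Ideal.span {f}) (C (p:ℤ) * E) := by rw [hE]
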